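/- Let (S, ▷) be a left-cancellative LD-system and m ≥ 2. If w and w′ are m-strand braid words representing the same element of the braid group B_m, and a⃗ ∈ S^m is a sequence such that both partial colourings a⃗ · w and a⃗ · w′ are defined, then a⃗ · w = a⃗ · w′. -/

import Mathlib

/-- The braid relators on generators `σ_1, …, σ_k` (indexed by `Fin k`). -/
def braidRels (k : ℕ) : Set (FreeGroup (Fin k)) :=
  { r | (∃ i j : Fin k, 2 ≤ Nat.dist (i : ℕ) (j : ℕ) ∧
          r = FreeGroup.of i * FreeGroup.of j * (FreeGroup.of j * FreeGroup.of i)⁻¹) ∨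
        (∃ i j : Fin k, Nat.dist (i : ℕ) (j : ℕ) = 1 ∧
          r = FreeGroup.of i * FreeGroup.of j * FreeGroup.of i *
              (FreeGroup.of j * FreeGroup.of i * FreeGroup.of j)⁻¹) }

/-- The element of the braid group represented by a braid word, i.e. a list of letters
`σ_i` (sign `true`) or `σ_i⁻¹` (sign `false`). -/
def wordProd {k : ℕ} (w : List (Fin k × Bool)) : PresentedGroup (braidRels k) :=
  (w.map (fun l => if l.2 then PresentedGroup.of l.1 else (PresentedGroup.of l.1)⁻¹)).prod

/-- The positive colouring move: `(a_i, a_{i+1}) ↦ (a_i ▷ a_{i+1}, a_i)`. -/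
def braidMove {S : Type*} (act : S → S → S) {m : ℕ} (i : Fin (m - 1))
    (a : Fin m → S) : Fin m → S :=
  fun j =>
    if (j : ℕ) = (i : ℕ) then
      act (a ⟨(i : ℕ), by have := i.isLt; omega⟩) (a ⟨(i : ℕ) + 1, by have := i.isLt; omega⟩)
    else if (j : ℕ) = (i : ℕ) + 1 then a ⟨(i : ℕ), by have := i.isLt; omega⟩
    else a j

/-- The negative colouring move with chosen colour `c`:
`(a_i, a_{i+1}) ↦ (a_{i+1}, c)`. -/
def negMove {S : Type*} {m : ℕ} (i : Fin (m - 1)) (c : S) (a : Fin m → S) : Fin m → S :=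
  fun j =>
    if (j : ℕ) = (i : ℕ) then a ⟨(i : ℕ) + 1, by have := i.isLt; omega⟩
    else if (j : ℕ) = (i : ℕ) + 1 then c
    else a j

/-- One step of the partial colouring: for a positive letter `σ_i` apply the positive
move; for a negative letter `σ_i⁻¹` the step is defined only if there is `c` with
`a_{i+1} ▷ c = a_i`, and then `(a_i, a_{i+1})` is replaced by `(a_{i+1}, c)`. -/
def ColourStep {S : Type*} (act : S → S → S) {m : ℕ} (l : Fin (m - 1) × Bool)
    (a b : Fin m → S) : Prop :=
  if l.2 then b = braidMove act l.1 a
  else ∃ c : S,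
    act (a ⟨(l.1 : ℕ) + 1, by have := l.1.isLt; omega⟩) c =
        a ⟨(l.1 : ℕ), by have := l.1.isLt; omega⟩ ∧
    b = negMove l.1 c a

/-- `ColourRel act w a b` holds iff the partial colouring `a · w` is defined and
equals `b`. -/
def ColourRel {S : Type*} (act : S → S → S) {m : ℕ} :
    List (Fin (m - 1) × Bool) → (Fin m → S) → (Fin m → S) → Prop
  | [], a, b => b = a
  | l :: w, a, b => ∃ a', ColourStep act l a a' ∧ ColourRel act w a' b


namespace BrW

abbrev W := List ℕ

inductive Bp : W → W → Prop
  | comm {i j : ℕ} (h : 2 ≤ Nat.dist i j) : Bp [i, j] [j, i]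
  | braid {i j : ℕ} (h : Nat.dist i j = 1) : Bp [i, j, i] [j, i, j]

def Rel1 (u v : W) : Prop :=
  ∃ a x y b, Bp x y ∧ u = a ++ x ++ b ∧ v = a ++ y ++ b

inductive EqvN : ℕ → W → W → Prop
  | refl (u : W) : EqvN 0 u u
  | step {u v w : W} {n : ℕ} : Rel1 u v → EqvN n v w → EqvN (n + 1) u w

def Eqv (u v : W) : Prop := ∃ n, EqvN n u v

theorem Bp.symm {x y : W} (h : Bp x y) : Bp y x := by
  cases h with
  | comm h => exact .comm (by rwa [Nat.dist_comm])
  | braid h => exact .braid (by rwa [Nat.dist_comm])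

theorem Bp.length {x y : W} (h : Bp x y) : x.length = y.length := by cases h <;> rfl

theorem Rel1.symm {u v : W} (h : Rel1 u v) : Rel1 v u := by
  obtain ⟨a, x, y, b, hp, h1, h2⟩ := h
  exact ⟨a, y, x, b, hp.symm, h2, h1⟩

theorem Rel1.length {u v : W} (h : Rel1 u v) : u.length = v.length := by
  obtain ⟨a, x, y, b, hp, h1, h2⟩ := h
  subst h1; subst h2; simp [hp.length]

theorem EqvN.length {n : ℕ} {u v : W} (h : EqvN n u v) : u.length = v.length := by
  induction h with
  | refl => rfl
  | step h1 _ ih => exact h1.length.trans ih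

theorem Eqv.refl (u : W) : Eqv u u := ⟨0, .refl u⟩

theorem Eqv.of1 {u v : W} (h : Rel1 u v) : Eqv u v := ⟨1, .step h (.refl v)⟩

theorem EqvN.trans' {n m : ℕ} {u v w : W} (h : EqvN n u v) (h' : EqvN m v w) :
    EqvN (n + m) u w := by
  induction h with
  | refl => simpa using h'
  | step h1 _ ih => exact (by omega : ∀ a b : ℕ, a + 1 + b = (a + b) + 1) _ _ ▸ .step h1 (ih h')

theorem Eqv.trans {u v w : W} (h : Eqv u v) (h' : Eqv v w) : Eqv u w := by
  obtain ⟨n, h⟩ := h; obtain ⟨m, h'⟩ := h'; exact ⟨n + m, h.trans' h'⟩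

scoped infix:50 " ≋ " => Eqv

instance : Trans Eqv Eqv Eqv := ⟨Eqv.trans⟩

theorem EqvN.snoc {n : ℕ} {u v w : W} (h : EqvN n u v) (h' : Rel1 v w) : EqvN (n + 1) u w := by
  induction h with
  | refl => exact .step h' (.refl _)
  | step h1 _ ih => exact .step h1 (ih h')

theorem Eqv.symm {u v : W} (h : Eqv u v) : Eqv v u := by
  obtain ⟨n, h⟩ := h
  refine ⟨n, ?_⟩
  induction h with
  | refl => exact .refl _
  | step h1 _ ih => exact ih.snoc h1.symm

theorem Eqv.length {u v : W} (h : Eqv u v) : u.length = v.length := by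
  obtain ⟨n, h⟩ := h; exact h.length

theorem Rel1.congr {u v : W} (c d : W) (h : Rel1 u v) : Rel1 (c ++ u ++ d) (c ++ v ++ d) := by
  obtain ⟨a, x, y, b, hp, h1, h2⟩ := h
  exact ⟨c ++ a, x, y, b ++ d, hp, by subst h1; simp, by subst h2; simp⟩

theorem Eqv.congr {u v : W} (c d : W) (h : Eqv u v) : Eqv (c ++ u ++ d) (c ++ v ++ d) := by
  obtain ⟨n, h⟩ := h
  refine ⟨n, ?_⟩
  induction h with
  | refl => exact .refl _
  | step h1 _ ih => exact .step (h1.congr c d) ih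

theorem Eqv.appL {u v : W} (c : W) (h : Eqv u v) : Eqv (c ++ u) (c ++ v) := by
  simpa using h.congr c []

theorem Eqv.appR {u v : W} (d : W) (h : Eqv u v) : Eqv (u ++ d) (v ++ d) := by
  simpa using h.congr [] d

theorem Eqv.cons {u v : W} (x : ℕ) (h : Eqv u v) : Eqv (x :: u) (x :: v) := by
  simpa using h.appL [x]

theorem Eqv.app {u v u' v' : W} (h : Eqv u u') (h' : Eqv v v') : Eqv (u ++ v) (u' ++ v') :=
  (h.appR v).trans (h'.appL u')

theorem swapE {i j : ℕ} (h : 2 ≤ Nat.dist i j) (t : W) : Eqv (i :: j :: t) (j :: i :: t) :=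
  Eqv.of1 ⟨[], [i, j], [j, i], t, .comm h, rfl, rfl⟩

theorem braidE {i j : ℕ} (h : Nat.dist i j = 1) (t : W) :
    Eqv (i :: j :: i :: t) (j :: i :: j :: t) :=
  Eqv.of1 ⟨[], [i, j, i], [j, i, j], t, .braid h, rfl, rfl⟩

/-- Boundedness of all letters. -/
def Bdd (b : ℕ) (u : W) : Prop := ∀ x ∈ u, x < b

theorem Bp.bdd {b : ℕ} {x y : W} (h : Bp x y) (hx : Bdd b x) : Bdd b y := by
  cases h with
  | comm h => intro t ht; simp_all [Bdd]; rcases ht with h|h <;> omega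
  | braid h => intro t ht; simp_all [Bdd]; rcases ht with h|h|h <;> omega

theorem Bdd.append {b : ℕ} {u v : W} (hu : Bdd b u) (hv : Bdd b v) : Bdd b (u ++ v) := by
  intro x hx; rcases List.mem_append.1 hx with h | h; exacts [hu x h, hv x h]

theorem Bdd.of_append_left {b : ℕ} {u v : W} (h : Bdd b (u ++ v)) : Bdd b u := fun x hx =>
  h x (List.mem_append.2 (Or.inl hx))

theorem Bdd.of_append_right {b : ℕ} {u v : W} (h : Bdd b (u ++ v)) : Bdd b v := fun x hx =>
  h x (List.mem_append.2 (Or.inr hx))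

theorem Rel1.bdd {b : ℕ} {u v : W} (h : Rel1 u v) (hu : Bdd b u) : Bdd b v := by
  obtain ⟨a, x, y, c, hp, h1, h2⟩ := h
  subst h1; subst h2
  exact ((hu.of_append_left.of_append_left).append
    (hp.bdd hu.of_append_left.of_append_right)).append hu.of_append_right

theorem Eqv.bdd {b : ℕ} {u v : W} (h : Eqv u v) (hu : Bdd b u) : Bdd b v := by
  obtain ⟨n, h⟩ := h
  induction h with
  | refl => exact hu
  | step h1 _ ih => exact ih (h1.bdd hu)

theorem Bdd.rev {b : ℕ} {u : W} (h : Bdd b u) : Bdd b u.reverse := by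
  intro x hx; exact h x (List.mem_reverse.1 hx)

/-- Reversal preserves the relations. -/
theorem Bp.rev {x y : W} (h : Bp x y) : Bp x.reverse y.reverse := by
  cases h with
  | comm h => exact .comm (by rwa [Nat.dist_comm])
  | braid h => simpa using Bp.braid h

theorem Rel1.rev {u v : W} (h : Rel1 u v) : Rel1 u.reverse v.reverse := by
  obtain ⟨a, x, y, c, hp, h1, h2⟩ := h
  exact ⟨c.reverse, x.reverse, y.reverse, a.reverse, hp.rev, by subst h1; simp,
    by subst h2; simp⟩

theorem Eqv.rev {u v : W} (h : Eqv u v) : Eqv u.reverse v.reverse := by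
  obtain ⟨n, h⟩ := h
  refine ⟨n, ?_⟩
  induction h with
  | refl => exact .refl _
  | step h1 _ ih => exact .step h1.rev ih


/-- The complement of `i` in `j`: the word `c` with `i ⋅ (c) = lcm`. -/
def comp (i j : ℕ) : W := if i = j then [] else if Nat.dist i j = 1 then [j, i] else [j]

theorem comp_self (i : ℕ) : comp i i = [] := by simp [comp]

theorem comp_adj {i j : ℕ} (h : Nat.dist i j = 1) : comp i j = [j, i] := by
  have : i ≠ j := by simp [Nat.dist] at *; omega
  simp [comp, this, h]

theorem comp_far {i j : ℕ} (h : 2 ≤ Nat.dist i j) : comp i j = [j] := by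
  have h1 : i ≠ j := by simp [Nat.dist] at *; omega
  have h2 : ¬ Nat.dist i j = 1 := by omega
  simp [comp, h1, h2]

/-- Garside's key lemma: common left letters analysis. -/
theorem gars : ∀ ℓ : ℕ, ∀ {n : ℕ} {x y : W}, EqvN n x y → x.length ≤ ℓ →
    ∀ i u j v, x = i :: u → y = j :: v →
    ∃ w, Eqv u (comp i j ++ w) ∧ Eqv v (comp j i ++ w) := by
  intro ℓ
  induction ℓ using Nat.strong_induction_on with
  | _ ℓ ihℓ =>
  have OUT : ∀ {i' j' : ℕ} {u' v' : W}, Eqv (i' :: u') (j' :: v') → u'.length + 1 < ℓ →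
      ∃ w, Eqv u' (comp i' j' ++ w) ∧ Eqv v' (comp j' i' ++ w) := by
    intro i' j' u' v' h hlt
    obtain ⟨n', hn⟩ := h
    exact ihℓ _ hlt hn (by simp) _ _ _ _ rfl rfl
  intro n x y h
  induction h with
  | refl u₀ =>
    intro _ i u j v hx hy
    subst hx
    obtain ⟨rfl, rfl⟩ : i = j ∧ u = v := ⟨by injection hy, by injection hy⟩
    exact ⟨u, by simpa [comp_self] using Eqv.refl u, by simpa [comp_self] using Eqv.refl u⟩
  | @step _ z _ nn h1 h2 ih =>
    intro hlen i u j v hx hy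
    subst hx; subst hy
    have hlz : z.length ≤ ℓ := by rw [← h1.length]; exact hlen
    obtain ⟨A, p, q, B, hp, hu, hz⟩ := h1
    cases A with
    | cons c A' =>
      have hci : c = i := by
        have h := hu; simp only [List.cons_append] at h
        injection h with h1 h2; exact h1.symm
      subst hci
      have hu' : u = A' ++ p ++ B := by
        have h := hu; simp only [List.cons_append] at h
        injection h
      have hz' : z = c :: (A' ++ q ++ B) := by
        simpa only [List.cons_append] using hz
      obtain ⟨w₁, E1, E2⟩ := ih hlz c (A' ++ q ++ B) j v hz' rfl
      exact ⟨w₁, (Eqv.of1 ⟨A', p, q, B, hp, hu', rfl⟩).trans E1, E2⟩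
    | nil =>
      simp only [List.nil_append] at hu hz
      cases hp with
      | @comm i0 k hik0 =>
        -- u = k :: B , z = k :: i :: B,  dist i k ≥ 2
        obtain ⟨h1, rfl⟩ : i = i0 ∧ u = k :: B := by
          have h := hu; simp only [List.cons_append, List.nil_append] at h
          injection h with h1 h2; exact ⟨h1, h2⟩
        subst h1
        have hik : 2 ≤ Nat.dist i k := hik0
        have hzz : z = k :: (i :: B) := by simpa using hz
        have hlenB : B.length + 2 ≤ ℓ := by simp at hlen ⊢; omega
        obtain ⟨w₁, E1, E2⟩ := ih hlz k (i :: B) j v hzz rfl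
        have hki : 2 ≤ Nat.dist k i := by rwa [Nat.dist_comm] at hik
        rcases (by simp [Nat.dist]; omega : k = j ∨ Nat.dist k j = 1 ∨ 2 ≤ Nat.dist k j) with
          rfl | hkj | hkj
        · -- H1a : k = j
          rw [comp_self] at E1 E2
          simp only [List.nil_append] at E1 E2
          refine ⟨B, ?_, ?_⟩
          · rw [comp_far hik]; exact Eqv.refl _
          · rw [comp_far hki]
            exact E2.trans E1.symm
        · -- H1c : dist k j = 1
          rw [comp_adj hkj] at E1
          rw [comp_adj (by rwa [Nat.dist_comm] at hkj)] at E2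
          simp only [List.cons_append, List.nil_append] at E1 E2
          -- E1 : Eqv (i :: B) (j :: k :: w₁),  E2 : Eqv v (k :: j :: w₁)
          have hw₁ : w₁.length + 1 = B.length := by
            have := E1.length; simp at this; omega
          rcases (by simp [Nat.dist]; omega :
              i = j ∨ Nat.dist i j = 1 ∨ 2 ≤ Nat.dist i j) with rfl | hij | hij
          · exfalso; simp [Nat.dist] at hik hkj; omega
          · -- dist i j = 1 (and dist i k ≥ 2, dist k j = 1)
            obtain ⟨w₂, EB, EkW⟩ := OUT E1 (by omega)
            rw [comp_adj hij] at EB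
            rw [comp_adj (by rwa [Nat.dist_comm] at hij)] at EkW
            simp only [List.cons_append, List.nil_append] at EB EkW
            -- EB : Eqv B (j :: i :: w₂),  EkW : Eqv (k :: w₁) (i :: j :: w₂)
            have hw₂ : w₂.length + 2 = B.length := by
              have := EB.length; simp at this; omega
            obtain ⟨w₃, Ew1, EjW⟩ := OUT EkW (by omega)
            rw [comp_far hki] at Ew1
            rw [comp_far hik] at EjW
            simp only [List.cons_append, List.nil_append] at Ew1 EjW
            -- Ew1 : Eqv w₁ (i :: w₃),  EjW : Eqv (j :: w₂) (k :: w₃)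
            have hw₃ : w₃.length = w₂.length := by
              have := EjW.length; simp at this; omega
            obtain ⟨w₄, Ew2, Ew3⟩ := OUT EjW (by omega)
            rw [comp_adj (by rwa [Nat.dist_comm] at hkj)] at Ew2
            rw [comp_adj hkj] at Ew3
            simp only [List.cons_append, List.nil_append] at Ew2 Ew3
            -- Ew2 : Eqv w₂ (k :: j :: w₄),  Ew3 : Eqv w₃ (j :: k :: w₄)
            refine ⟨k :: j :: i :: w₄, ?_, ?_⟩
            · rw [comp_adj hij]
              -- goal : Eqv (k :: B) ([j,i] ++ (k::j::i::w₄))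
              simp only [List.cons_append, List.nil_append]
              calc ((k :: B) : W) ≋ (k :: j :: i :: w₂) := EB.cons k
                _ ≋ (k :: j :: i :: k :: j :: w₄) := (Ew2.cons i |>.cons j |>.cons k)
                _ ≋ (k :: j :: k :: i :: j :: w₄) :=
                    ((swapE hik (j :: w₄)).cons j |>.cons k)
                _ ≋ (j :: k :: j :: i :: j :: w₄) := braidE hkj _
                _ ≋ (j :: k :: i :: j :: i :: w₄) := ((braidE (by rwa [Nat.dist_comm] at hij) w₄).cons k |>.cons j)
                _ ≋ (j :: i :: k :: j :: i :: w₄) := ((swapE hki (j :: i :: w₄)).cons j)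
            · rw [comp_adj (by rwa [Nat.dist_comm] at hij)]
              simp only [List.cons_append, List.nil_append]
              calc (v : W) ≋ (k :: j :: w₁) := E2
                _ ≋ (k :: j :: i :: w₃) := (Ew1.cons j |>.cons k)
                _ ≋ (k :: j :: i :: j :: k :: w₄) := (Ew3.cons i |>.cons j |>.cons k)
                _ ≋ (k :: i :: j :: i :: k :: w₄) := ((braidE (by rwa [Nat.dist_comm] at hij) (k :: w₄)).cons k)
                _ ≋ (i :: k :: j :: i :: k :: w₄) := swapE hki _
                _ ≋ (i :: k :: j :: k :: i :: w₄) := ((swapE hik w₄).cons j |>.cons k |>.cons i)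
                _ ≋ (i :: j :: k :: j :: i :: w₄) := ((braidE hkj (i :: w₄)).cons i)
          · -- dist i j ≥ 2 (and dist i k ≥ 2, dist k j = 1)
            obtain ⟨w₂, EB, EkW⟩ := OUT E1 (by omega)
            rw [comp_far hij] at EB
            rw [comp_far (by rwa [Nat.dist_comm] at hij)] at EkW
            simp only [List.cons_append, List.nil_append] at EB EkW
            -- EB : Eqv B (j :: w₂), EkW : Eqv (k :: w₁) (i :: w₂)
            have hw₂ : w₂.length + 1 = B.length := by
              have := EB.length; simp at this; omega
            obtain ⟨w₃, Ew1, Ew2⟩ := OUT EkW (by omega)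
            rw [comp_far hki] at Ew1
            rw [comp_far hik] at Ew2
            simp only [List.cons_append, List.nil_append] at Ew1 Ew2
            -- Ew1 : Eqv w₁ (i :: w₃), Ew2 : Eqv w₂ (k :: w₃)
            refine ⟨k :: j :: w₃, ?_, ?_⟩
            · rw [comp_far hij]
              simp only [List.cons_append, List.nil_append]
              calc ((k :: B) : W) ≋ (k :: j :: w₂) := EB.cons k
                _ ≋ (k :: j :: k :: w₃) := (Ew2.cons j |>.cons k)
                _ ≋ (j :: k :: j :: w₃) := braidE hkj _
            · rw [comp_far (by rwa [Nat.dist_comm] at hij)]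
              simp only [List.cons_append, List.nil_append]
              calc (v : W) ≋ (k :: j :: w₁) := E2
                _ ≋ (k :: j :: i :: w₃) := (Ew1.cons j |>.cons k)
                _ ≋ (k :: i :: j :: w₃) := ((swapE (by rwa [Nat.dist_comm] at hij) w₃).cons k)
                _ ≋ (i :: k :: j :: w₃) := swapE hki _
        · -- H1b : dist k j ≥ 2
          rw [comp_far hkj] at E1
          rw [comp_far (by rwa [Nat.dist_comm] at hkj)] at E2
          simp only [List.cons_append, List.nil_append] at E1 E2
          -- E1 : Eqv (i :: B) (j :: w₁), E2 : Eqv v (k :: w₁)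
          have hw₁ : w₁.length = B.length := by
            have := E1.length; simp at this; omega
          obtain ⟨w₂, EB, Ew1⟩ := OUT E1 (by omega)
          rcases (by simp [Nat.dist]; omega :
              i = j ∨ Nat.dist i j = 1 ∨ 2 ≤ Nat.dist i j) with rfl | hij | hij
          · rw [comp_self] at EB Ew1
            simp only [List.nil_append] at EB Ew1
            refine ⟨k :: w₂, ?_, ?_⟩
            · rw [comp_self]
              simp only [List.nil_append]
              exact EB.cons k
            · rw [comp_self]
              simp only [List.nil_append]
              exact E2.trans (Ew1.cons k)
          · rw [comp_adj hij] at EB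
            rw [comp_adj (by rwa [Nat.dist_comm] at hij)] at Ew1
            simp only [List.cons_append, List.nil_append] at EB Ew1
            -- EB : Eqv B (j :: i :: w₂), Ew1 : Eqv w₁ (i :: j :: w₂)
            refine ⟨k :: w₂, ?_, ?_⟩
            · rw [comp_adj hij]
              simp only [List.cons_append, List.nil_append]
              calc ((k :: B) : W) ≋ (k :: j :: i :: w₂) := EB.cons k
                _ ≋ (j :: k :: i :: w₂) := swapE hkj _
                _ ≋ (j :: i :: k :: w₂) := ((swapE hki w₂).cons j)
            · rw [comp_adj (by rwa [Nat.dist_comm] at hij)]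
              simp only [List.cons_append, List.nil_append]
              calc (v : W) ≋ (k :: w₁) := E2
                _ ≋ (k :: i :: j :: w₂) := (Ew1.cons k)
                _ ≋ (i :: k :: j :: w₂) := swapE hki _
                _ ≋ (i :: j :: k :: w₂) := ((swapE hkj w₂).cons i)
          · rw [comp_far hij] at EB
            rw [comp_far (by rwa [Nat.dist_comm] at hij)] at Ew1
            simp only [List.cons_append, List.nil_append] at EB Ew1
            refine ⟨k :: w₂, ?_, ?_⟩
            · rw [comp_far hij]
              simp only [List.cons_append, List.nil_append]
              calc ((k :: B) : W) ≋ (k :: j :: w₂) := EB.cons k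
                _ ≋ (j :: k :: w₂) := swapE hkj _
            · rw [comp_far (by rwa [Nat.dist_comm] at hij)]
              simp only [List.cons_append, List.nil_append]
              calc (v : W) ≋ (k :: w₁) := E2
                _ ≋ (k :: i :: w₂) := Ew1.cons k
                _ ≋ (i :: k :: w₂) := swapE hki _
      | @braid i0 k hik0 =>
        -- p = [i,k,i], q = [k,i,k] : u = k :: i :: B, z = k :: i :: k :: B, dist i k = 1
        obtain ⟨h1, rfl⟩ : i = i0 ∧ u = k :: i0 :: B := by
          have h := hu; simp only [List.cons_append, List.nil_append] at h
          injection h with h1 h2; exact ⟨h1, h2⟩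
        subst h1
        have hik : Nat.dist i k = 1 := hik0
        have hzz : z = k :: (i :: k :: B) := by simpa using hz
        have hlenB : B.length + 3 ≤ ℓ := by simp at hlen ⊢; omega
        obtain ⟨w₁, E1, E2⟩ := ih hlz k (i :: k :: B) j v hzz rfl
        have hki : Nat.dist k i = 1 := by rwa [Nat.dist_comm] at hik
        rcases (by simp [Nat.dist]; omega : k = j ∨ Nat.dist k j = 1 ∨ 2 ≤ Nat.dist k j) with
          rfl | hkj | hkj
        · -- H2a : k = j
          rw [comp_self] at E1 E2
          simp only [List.nil_append] at E1 E2
          refine ⟨B, ?_, ?_⟩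
          · rw [comp_adj hik]
            simp only [List.cons_append, List.nil_append]
            exact Eqv.refl _
          · rw [comp_adj hki]
            simp only [List.cons_append, List.nil_append]
            exact E2.trans E1.symm
        · -- H2c : dist k j = 1
          rw [comp_adj hkj] at E1
          rw [comp_adj (by rwa [Nat.dist_comm] at hkj)] at E2
          simp only [List.cons_append, List.nil_append] at E1 E2
          -- E1 : Eqv (i :: k :: B) (j :: k :: w₁), E2 : Eqv v (k :: j :: w₁)
          have hw₁ : w₁.length = B.length := by
            have := E1.length; simp at this; omega
          rcases (by simp [Nat.dist]; omega :
              i = j ∨ Nat.dist i j = 1 ∨ 2 ≤ Nat.dist i j) with rfl | hij | hij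
          · -- i = j
            obtain ⟨w₂, Ea, Eb⟩ := OUT E1 (by simp; omega)
            rw [comp_self] at Ea Eb
            simp only [List.nil_append] at Ea Eb
            have : Eqv (k :: B) (k :: w₁) := Ea.trans Eb.symm
            obtain ⟨w₃, Ec, Ed⟩ := OUT this (by omega)
            rw [comp_self] at Ec Ed
            simp only [List.nil_append] at Ec Ed
            have EBw : Eqv B w₁ := Ec.trans Ed.symm
            refine ⟨k :: i :: w₁, ?_, ?_⟩
            · rw [comp_self]
              simp only [List.nil_append]
              exact (EBw.cons i).cons k
            · rw [comp_self]
              simp only [List.nil_append]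
              exact E2
          · -- dist i j = 1 : impossible
            exfalso; simp [Nat.dist] at hik hkj hij; omega
          · -- dist i j ≥ 2
            obtain ⟨w₂, EkB, EkW⟩ := OUT E1 (by simp; omega)
            rw [comp_far hij] at EkB
            rw [comp_far (by rwa [Nat.dist_comm] at hij)] at EkW
            simp only [List.cons_append, List.nil_append] at EkB EkW
            -- EkB : Eqv (k :: B) (j :: w₂), EkW : Eqv (k :: w₁) (i :: w₂)
            have hw₂ : w₂.length = B.length := by
              have := EkB.length; simp at this; omega
            obtain ⟨w₃, EB, Ew2a⟩ := OUT EkB (by omega)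
            rw [comp_adj hkj] at EB
            rw [comp_adj (by rwa [Nat.dist_comm] at hkj)] at Ew2a
            simp only [List.cons_append, List.nil_append] at EB Ew2a
            -- EB : Eqv B (j :: k :: w₃), Ew2a : Eqv w₂ (k :: j :: w₃)
            obtain ⟨w₄, Ew1, Ew2b⟩ := OUT EkW (by omega)
            rw [comp_adj hki] at Ew1
            rw [comp_adj hik] at Ew2b
            simp only [List.cons_append, List.nil_append] at Ew1 Ew2b
            -- Ew1 : Eqv w₁ (i :: k :: w₄), Ew2b : Eqv w₂ (k :: i :: w₄)
            have hw₃ : w₃.length + 2 = w₂.length := by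
              have := Ew2a.length; simp at this; omega
            have hw₄ : w₄.length + 2 = w₂.length := by
              have := Ew2b.length; simp at this; omega
            have Ekk : Eqv (k :: (j :: w₃)) (k :: (i :: w₄)) := Ew2a.symm.trans Ew2b
            obtain ⟨wt, Et1, Et2⟩ := OUT Ekk (by simp; omega)
            rw [comp_self] at Et1 Et2
            simp only [List.nil_append] at Et1 Et2
            have EjI : Eqv (j :: w₃) (i :: w₄) := Et1.trans Et2.symm
            obtain ⟨w₅, Ew3, Ew4⟩ := OUT EjI (by omega)
            rw [comp_far (by rwa [Nat.dist_comm] at hij)] at Ew3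
            rw [comp_far hij] at Ew4
            simp only [List.cons_append, List.nil_append] at Ew3 Ew4
            -- Ew3 : Eqv w₃ (i :: w₅), Ew4 : Eqv w₄ (j :: w₅)
            refine ⟨k :: i :: j :: k :: w₅, ?_, ?_⟩
            · rw [comp_far hij]
              simp only [List.cons_append, List.nil_append]
              calc ((k :: i :: B) : W) ≋ (k :: i :: j :: k :: w₃) := ((EB.cons i).cons k)
                _ ≋ (k :: i :: j :: k :: i :: w₅) :=
                    ((Ew3.cons k |>.cons j |>.cons i).cons k)
                _ ≋ (k :: j :: i :: k :: i :: w₅) := ((swapE hij (k :: i :: w₅)).cons k)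
                _ ≋ (k :: j :: k :: i :: k :: w₅) := ((braidE hik w₅).cons j |>.cons k)
                _ ≋ (j :: k :: j :: i :: k :: w₅) := braidE hkj _
                _ ≋ (j :: k :: i :: j :: k :: w₅) := ((swapE (by rwa [Nat.dist_comm] at hij) (k :: w₅)).cons k |>.cons j)
            · rw [comp_far (by rwa [Nat.dist_comm] at hij)]
              simp only [List.cons_append, List.nil_append]
              calc (v : W) ≋ (k :: j :: w₁) := E2
                _ ≋ (k :: j :: i :: k :: w₄) := ((Ew1.cons j).cons k)
                _ ≋ (k :: j :: i :: k :: j :: w₅) :=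
                    ((Ew4.cons k |>.cons i |>.cons j).cons k)
                _ ≋ (k :: i :: j :: k :: j :: w₅) := ((swapE (by rwa [Nat.dist_comm] at hij) (k :: j :: w₅)).cons k)
                _ ≋ (k :: i :: k :: j :: k :: w₅) :=
                    ((braidE (by rwa [Nat.dist_comm] at hkj) w₅).cons i |>.cons k)
                _ ≋ (i :: k :: i :: j :: k :: w₅) := braidE hki _
        · -- H2b : dist k j ≥ 2
          rw [comp_far hkj] at E1
          rw [comp_far (by rwa [Nat.dist_comm] at hkj)] at E2
          simp only [List.cons_append, List.nil_append] at E1 E2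
          -- E1 : Eqv (i :: k :: B) (j :: w₁), E2 : Eqv v (k :: w₁)
          have hw₁ : w₁.length = B.length + 1 := by
            have := E1.length; simp at this; omega
          obtain ⟨w₂, EkB, Ew1⟩ := OUT E1 (by simp; omega)
          rcases (by simp [Nat.dist]; omega :
              i = j ∨ Nat.dist i j = 1 ∨ 2 ≤ Nat.dist i j) with rfl | hij | hij
          · exfalso; simp [Nat.dist] at hik hkj; omega
          · -- dist i j = 1
            rw [comp_adj hij] at EkB
            rw [comp_adj (by rwa [Nat.dist_comm] at hij)] at Ew1
            simp only [List.cons_append, List.nil_append] at EkB Ew1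
            -- EkB : Eqv (k :: B) (j :: i :: w₂), Ew1 : Eqv w₁ (i :: j :: w₂)
            have hw₂ : w₂.length + 2 = B.length + 1 := by
              have := EkB.length; simp at this; omega
            obtain ⟨w₃, EB, EiW⟩ := OUT EkB (by omega)
            rw [comp_far hkj] at EB
            rw [comp_far (by rwa [Nat.dist_comm] at hkj)] at EiW
            simp only [List.cons_append, List.nil_append] at EB EiW
            -- EB : Eqv B (j :: w₃), EiW : Eqv (i :: w₂) (k :: w₃)
            have hw₃ : w₃.length + 1 = B.length := by
              have := EB.length; simp at this; omega
            obtain ⟨w₄, Ew2, Ew3⟩ := OUT EiW (by omega)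
            rw [comp_adj hik] at Ew2
            rw [comp_adj hki] at Ew3
            simp only [List.cons_append, List.nil_append] at Ew2 Ew3
            -- Ew2 : Eqv w₂ (k :: i :: w₄), Ew3 : Eqv w₃ (i :: k :: w₄)
            refine ⟨k :: i :: j :: w₄, ?_, ?_⟩
            · rw [comp_adj hij]
              simp only [List.cons_append, List.nil_append]
              calc ((k :: i :: B) : W) ≋ (k :: i :: j :: w₃) := ((EB.cons i).cons k)
                _ ≋ (k :: i :: j :: i :: k :: w₄) := ((Ew3.cons j |>.cons i).cons k)
                _ ≋ (k :: j :: i :: j :: k :: w₄) := ((braidE hij (k :: w₄)).cons k)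
                _ ≋ (j :: k :: i :: j :: k :: w₄) := swapE hkj _
                _ ≋ (j :: k :: i :: k :: j :: w₄) :=
                    ((swapE (by rwa [Nat.dist_comm] at hkj) w₄).cons i |>.cons k |>.cons j)
                _ ≋ (j :: i :: k :: i :: j :: w₄) := ((braidE hki (j :: w₄)).cons j)
            · rw [comp_adj (by rwa [Nat.dist_comm] at hij)]
              simp only [List.cons_append, List.nil_append]
              calc (v : W) ≋ (k :: w₁) := E2
                _ ≋ (k :: i :: j :: w₂) := Ew1.cons k
                _ ≋ (k :: i :: j :: k :: i :: w₄) := ((Ew2.cons j |>.cons i).cons k)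
                _ ≋ (k :: i :: k :: j :: i :: w₄) :=
                    ((swapE (by rwa [Nat.dist_comm] at hkj) (i :: w₄)).cons i |>.cons k)
                _ ≋ (i :: k :: i :: j :: i :: w₄) := braidE hki _
                _ ≋ (i :: k :: j :: i :: j :: w₄) := ((braidE hij w₄).cons k |>.cons i)
                _ ≋ (i :: j :: k :: i :: j :: w₄) := ((swapE hkj (i :: j :: w₄)).cons i)
          · -- dist i j ≥ 2
            rw [comp_far hij] at EkB
            rw [comp_far (by rwa [Nat.dist_comm] at hij)] at Ew1
            simp only [List.cons_append, List.nil_append] at EkB Ew1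
            -- EkB : Eqv (k :: B) (j :: w₂), Ew1 : Eqv w₁ (i :: w₂)
            have hw₂ : w₂.length = B.length := by
              have := EkB.length; simp at this; omega
            obtain ⟨w₃, EB, Ew2⟩ := OUT EkB (by omega)
            rw [comp_far hkj] at EB
            rw [comp_far (by rwa [Nat.dist_comm] at hkj)] at Ew2
            simp only [List.cons_append, List.nil_append] at EB Ew2
            -- EB : Eqv B (j :: w₃), Ew2 : Eqv w₂ (k :: w₃)
            refine ⟨k :: i :: w₃, ?_, ?_⟩
            · rw [comp_far hij]
              simp only [List.cons_append, List.nil_append]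
              calc ((k :: i :: B) : W) ≋ (k :: i :: j :: w₃) := ((EB.cons i).cons k)
                _ ≋ (k :: j :: i :: w₃) := ((swapE hij w₃).cons k)
                _ ≋ (j :: k :: i :: w₃) := swapE hkj _
            · rw [comp_far (by rwa [Nat.dist_comm] at hij)]
              simp only [List.cons_append, List.nil_append]
              calc (v : W) ≋ (k :: w₁) := E2
                _ ≋ (k :: i :: w₂) := Ew1.cons k
                _ ≋ (k :: i :: k :: w₃) := ((Ew2.cons i).cons k)
                _ ≋ (i :: k :: i :: w₃) := braidE hki _


/-! ### Cancellation -/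

theorem cancel_head {i : ℕ} {u v : W} (h : Eqv (i :: u) (i :: v)) : Eqv u v := by
  obtain ⟨n, hn⟩ := h
  obtain ⟨w, h1, h2⟩ := gars (i :: u).length hn le_rfl i u i v rfl rfl
  rw [comp_self] at h1 h2
  simp only [List.nil_append] at h1 h2
  exact h1.trans h2.symm

theorem cancel_left {p u v : W} (h : Eqv (p ++ u) (p ++ v)) : Eqv u v := by
  induction p with
  | nil => simpa using h
  | cons x p ih => exact ih (cancel_head (by simpa using h))

/-! ### The Garside element -/

/-- The descending word `[n, n-1, …, 0]`. -/
def dsc : ℕ → W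
  | 0 => [0]
  | n + 1 => (n + 1) :: dsc n

/-- The Garside half-twist word `Δ` on letters `< b`. -/
def Dw : ℕ → W
  | 0 => []
  | b + 1 => Dw b ++ dsc b

theorem mem_dsc {n x : ℕ} : x ∈ dsc n ↔ x ≤ n := by
  induction n with
  | zero => simp [dsc]
  | succ n ih => simp [dsc, ih]; omega

theorem bdd_dsc (n : ℕ) : Bdd (n + 1) (dsc n) := fun x hx => by
  have := mem_dsc.1 hx; omega

theorem bdd_Dw (b : ℕ) : Bdd b (Dw b) := by
  induction b with
  | zero => intro x hx; simp [Dw] at hx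
  | succ b ih =>
    intro x hx
    rcases List.mem_append.1 hx with h | h
    · exact lt_trans (ih x h) (by omega)
    · exact bdd_dsc b x h

theorem commPast {i : ℕ} {w : W} (h : ∀ x ∈ w, 2 ≤ Nat.dist i x) :
    Eqv (i :: w) (w ++ [i]) := by
  induction w with
  | nil => exact Eqv.refl _
  | cons x w ih =>
    refine (swapE (h x (by simp)) w).trans ?_
    exact (ih (fun y hy => h y (by simp [hy]))).cons x

/-- Passing a letter through the descending word shifts it up by one. -/
theorem dscPass : ∀ {n i : ℕ}, i < n → Eqv (i :: dsc n) (dsc n ++ [i + 1]) := by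
  intro n
  induction n with
  | zero => omega
  | succ n ih =>
    intro i hi
    rcases Nat.lt_or_ge i n with h | h
    · -- i < n : commute i with n+1 then use ih
      refine (swapE (by simp [Nat.dist]; omega) (dsc n)).trans ?_
      show Eqv ((n+1) :: (i :: dsc n)) (((n+1) :: dsc n) ++ [i+1])
      exact (ih h).cons (n + 1)
    · -- i = n
      have hin : i = n := by omega
      subst hin
      match i with
      | 0 =>
        show Eqv [0, 1, 0] ([1, 0] ++ [1])
        exact braidE (by simp [Nat.dist]) []
      | Nat.succ i' =>
        show Eqv ((i'+1) :: (i'+2) :: ((i'+1) :: dsc i')) _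
        refine (braidE (by simp only [Nat.dist]; omega) (dsc i')).trans ?_
        show Eqv ((i'+2) :: (i'+1) :: ((i'+2) :: dsc i')) (((i'+2) :: (i'+1) :: dsc i') ++ [i'+2])
        have hc : Eqv ((i'+2) :: dsc i') (dsc i' ++ [i'+2]) := by
          refine commPast (fun x hx => ?_)
          have := mem_dsc.1 hx
          simp [Nat.dist]; omega
        simpa using (hc.cons (i'+1)).cons (i'+2)

/-- The key inductive identity for the top letter. -/
theorem Tlem : ∀ b : ℕ, Eqv ((b+1) :: (dsc b ++ dsc (b+1))) (dsc b ++ dsc (b+1) ++ [0]) := by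
  intro b
  induction b with
  | zero =>
    show Eqv [1, 0, 1, 0] _
    exact braidE (by simp [Nat.dist]) [0]
  | succ b ih =>
    refine Eqv.symm ?_
    -- RHS = dsc (b+1) ++ dsc (b+2) ++ [0]
    have e1 : dsc (b+1) ++ dsc (b+2) ++ [0] =
        (b+1) :: (dsc b ++ ((b+2) :: (dsc (b+1) ++ [0]))) := by
      show ((b+1) :: dsc b) ++ ((b+2) :: dsc (b+1)) ++ [0] = _
      simp
    rw [e1]
    have hcomm : Eqv ((b+2) :: dsc b) (dsc b ++ [b+2]) :=
      commPast (fun x hx => by have := mem_dsc.1 hx; simp [Nat.dist]; omega)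
    -- step 1 : pull (b+2) to the front of dsc b
    have s1 : Eqv ((b+1) :: (dsc b ++ ((b+2) :: (dsc (b+1) ++ [0]))))
        ((b+1) :: ((b+2) :: (dsc b ++ (dsc (b+1) ++ [0])))) := by
      refine Eqv.cons (b+1) ?_
      have := (hcomm.symm).appR (dsc (b+1) ++ [0])
      simpa using this
    refine s1.trans ?_
    -- step 2 : use ih backwards inside
    have s2 : Eqv ((b+1) :: ((b+2) :: (dsc b ++ (dsc (b+1) ++ [0]))))
        ((b+1) :: (b+2) :: ((b+1) :: (dsc b ++ dsc (b+1)))) := by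
      refine Eqv.cons (b+1) (Eqv.cons (b+2) ?_)
      have := ih.symm
      simpa using this
    refine s2.trans ?_
    -- step 3 : braid on the first three letters
    refine (braidE (by simp [Nat.dist]) _).trans ?_
    -- now : (b+2) :: (b+1) :: (b+2) :: (dsc b ++ dsc (b+1))
    have s4 : Eqv ((b+2) :: (b+1) :: ((b+2) :: dsc b) ++ dsc (b+1))
        ((b+2) :: (b+1) :: (dsc b ++ ([b+2] ++ dsc (b+1)))) := by
      refine Eqv.cons (b+2) (Eqv.cons (b+1) ?_)
      simpa using hcomm.appR (dsc (b+1))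
    refine Eqv.trans (by simpa using s4) ?_
    show Eqv (((b+2) :: (b+1) :: dsc b) ++ ((b+2) :: dsc (b+1)))
      (((b+2) :: (b+1) :: dsc b) ++ dsc (b+2))
    exact Eqv.refl _

/-- Flip property of `Δ` for a single letter. -/
theorem flipDw : ∀ b : ℕ, ∀ i < b, Eqv (i :: Dw b) (Dw b ++ [b - 1 - i]) := by
  intro b
  induction b with
  | zero => omega
  | succ b ih =>
    intro i hi
    rcases Nat.lt_or_ge i b with h | h
    · show Eqv (i :: (Dw b ++ dsc b)) (Dw b ++ dsc b ++ [b + 1 - 1 - i])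
      have s1 : Eqv ((i :: Dw b) ++ dsc b) ((Dw b ++ [b - 1 - i]) ++ dsc b) :=
        (ih i h).appR _
      refine Eqv.trans (by simpa using s1) ?_
      have s2 : Eqv ((b - 1 - i) :: dsc b) (dsc b ++ [b - 1 - i + 1]) := dscPass (by omega)
      have : Eqv (Dw b ++ ((b - 1 - i) :: dsc b)) (Dw b ++ (dsc b ++ [b - 1 - i + 1])) :=
        s2.appL _
      have e : b - 1 - i + 1 = b + 1 - 1 - i := by omega
      rw [e] at this
      simpa using this
    · have hib : i = b := by omega
      subst hib
      show Eqv (i :: Dw (i+1)) (Dw (i+1) ++ [i + 1 - 1 - i])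
      have e : i + 1 - 1 - i = 0 := by omega
      rw [e]
      match i with
      | 0 => exact Eqv.refl _
      | Nat.succ c =>
        show Eqv ((c+1) :: ((Dw c ++ dsc c) ++ dsc (c+1))) _
        have hcomm : Eqv ((c+1) :: Dw c) (Dw c ++ [c+1]) :=
          commPast (fun x hx => by have := bdd_Dw c x hx; simp [Nat.dist]; omega)
        have s1 : Eqv ((c+1) :: (Dw c ++ (dsc c ++ dsc (c+1))))
            ((Dw c ++ [c+1]) ++ (dsc c ++ dsc (c+1))) := by
          simpa using hcomm.appR (dsc c ++ dsc (c+1))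
        refine Eqv.trans (by simpa using s1) ?_
        have s2 : Eqv (Dw c ++ ((c+1) :: (dsc c ++ dsc (c+1))))
            (Dw c ++ (dsc c ++ dsc (c+1) ++ [0])) := (Tlem c).appL _
        refine Eqv.trans (by simpa using s2) ?_
        show Eqv (Dw c ++ (dsc c ++ (dsc (c+1) ++ [0]))) ((Dw c ++ dsc c) ++ dsc (c+1) ++ [0])
        simp [List.append_assoc]
        exact Eqv.refl _

/-- Letter-wise flip map. -/
def mapFlip (b : ℕ) (w : W) : W := w.map (fun i => b - 1 - i)

theorem bdd_mapFlip {b : ℕ} {w : W} (h : Bdd b w) : Bdd b (mapFlip b w) := by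
  intro x hx
  simp [mapFlip] at hx
  obtain ⟨y, hy, rfl⟩ := hx
  have := h y hy; omega

theorem mapFlip_invol {b : ℕ} {w : W} (h : Bdd b w) : mapFlip b (mapFlip b w) = w := by
  induction w with
  | nil => rfl
  | cons x w ih =>
    have hx := h x (by simp)
    have ih' := ih (fun y hy => h y (by simp [hy]))
    simp only [mapFlip, List.map_cons] at ih' ⊢
    rw [ih']
    congr 1
    omega

theorem flipW {b : ℕ} {w : W} (h : Bdd b w) : Eqv (w ++ Dw b) (Dw b ++ mapFlip b w) := by
  induction w with
  | nil => simpa [mapFlip] using Eqv.refl (Dw b)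
  | cons x w ih =>
    show Eqv (x :: (w ++ Dw b)) _
    have s1 := (ih (fun y hy => h y (by simp [hy]))).cons x
    refine s1.trans ?_
    have s2 : Eqv ((x :: Dw b) ++ mapFlip b w) ((Dw b ++ [b - 1 - x]) ++ mapFlip b w) :=
      (flipDw b x (h x (by simp))).appR _
    refine Eqv.trans (by simpa using s2) ?_
    simpa [mapFlip] using Eqv.refl (Dw b ++ ((b-1-x) :: mapFlip b w))

theorem passDw {b : ℕ} {c : W} (h : Bdd b c) :
    Eqv (Dw b ++ c) (mapFlip b c ++ Dw b) := by
  have := (flipW (bdd_mapFlip h)).symm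
  rwa [mapFlip_invol h] at this

/-- Powers of `Δ`. -/
def DwPow (b : ℕ) : ℕ → W
  | 0 => []
  | L + 1 => Dw b ++ DwPow b L

theorem bdd_DwPow (b L : ℕ) : Bdd b (DwPow b L) := by
  induction L with
  | zero => intro x hx; simp [DwPow] at hx
  | succ L ih => exact (bdd_Dw b).append ih

theorem DwPow_snoc (b L : ℕ) : DwPow b (L + 1) = DwPow b L ++ Dw b := by
  induction L with
  | zero => simp [DwPow]
  | succ L ih =>
    show Dw b ++ DwPow b (L + 1) = (Dw b ++ DwPow b L) ++ Dw b
    rw [ih, List.append_assoc]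

theorem DwPow_add (b L1 L2 : ℕ) : DwPow b (L1 + L2) = DwPow b L1 ++ DwPow b L2 := by
  induction L2 with
  | zero => simp [DwPow]
  | succ L2 ih =>
    rw [show L1 + (L2 + 1) = (L1 + L2) + 1 from rfl, DwPow_snoc, ih, DwPow_snoc,
      List.append_assoc]

theorem passDwPow {b : ℕ} (L : ℕ) {c : W} (h : Bdd b c) :
    ∃ d, Bdd b d ∧ Eqv (DwPow b L ++ c) (d ++ DwPow b L) := by
  induction L with
  | zero => exact ⟨c, h, by simpa [DwPow] using Eqv.refl c⟩
  | succ L ih =>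
    obtain ⟨d, hd, hE⟩ := ih
    refine ⟨mapFlip b d, bdd_mapFlip hd, ?_⟩
    show Eqv ((Dw b ++ DwPow b L) ++ c) (mapFlip b d ++ (Dw b ++ DwPow b L))
    have s1 : Eqv (Dw b ++ (DwPow b L ++ c)) (Dw b ++ (d ++ DwPow b L)) := hE.appL _
    refine Eqv.trans (by simpa using s1) ?_
    have s2 : Eqv ((Dw b ++ d) ++ DwPow b L) ((mapFlip b d ++ Dw b) ++ DwPow b L) :=
      (passDw hd).appR _
    refine Eqv.trans (by simpa using s2) ?_
    simpa using Eqv.refl (mapFlip b d ++ (Dw b ++ DwPow b L))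

theorem dsc_last : ∀ n : ℕ, ∃ d, dsc n = d ++ [0] := by
  intro n
  induction n with
  | zero => exact ⟨[], rfl⟩
  | succ n ih => obtain ⟨d, hd⟩ := ih; exact ⟨(n+1) :: d, by simp [dsc, hd]⟩

/-- Right divisibility of `Δ` by every letter. -/
theorem rightDiv : ∀ b : ℕ, ∀ j < b, ∃ c, Eqv (Dw b) (c ++ [j]) := by
  intro b
  induction b with
  | zero => omega
  | succ b ih =>
    intro j hj
    match j with
    | 0 =>
      obtain ⟨d, hd⟩ := dsc_last b
      exact ⟨Dw b ++ d, by show Eqv (Dw b ++ dsc b) _; rw [hd]; simpa using Eqv.refl _⟩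
    | Nat.succ j' =>
      obtain ⟨c, hc⟩ := ih j' (by omega)
      refine ⟨c ++ dsc b, ?_⟩
      show Eqv (Dw b ++ dsc b) _
      have s1 : Eqv (Dw b ++ dsc b) ((c ++ [j']) ++ dsc b) := hc.appR _
      refine s1.trans ?_
      have s2 : Eqv (c ++ (j' :: dsc b)) (c ++ (dsc b ++ [j' + 1])) :=
        (dscPass (by omega)).appL c
      refine Eqv.trans (by simpa using s2) ?_
      simpa using Eqv.refl (c ++ dsc b ++ [j'+1])

/-- Every bounded word left-divides a power of `Δ`. -/
theorem leftMult {b : ℕ} : ∀ {u : W}, Bdd b u →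
    ∃ r, Bdd b r ∧ Eqv (DwPow b u.length) (r ++ u) := by
  intro u
  induction u using List.reverseRecOn with
  | nil => exact fun _ => ⟨[], fun x hx => by simp at hx, by simpa [DwPow] using Eqv.refl []⟩
  | append_singleton u j ih =>
    intro h
    obtain ⟨r, hr, hE⟩ := ih h.of_append_left
    have hj : j < b := h j (by simp)
    obtain ⟨c, hc⟩ := rightDiv b j hj
    have hcb : Bdd b c := (hc.bdd (bdd_Dw b)).of_append_left
    obtain ⟨d, hd, hpass⟩ := passDwPow u.length hcb
    refine ⟨d ++ r, hd.append hr, ?_⟩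
    have e : (u ++ [j]).length = u.length + 1 := by simp
    rw [e, DwPow_snoc]
    have s1 : Eqv (DwPow b u.length ++ Dw b) (DwPow b u.length ++ (c ++ [j])) := hc.appL _
    refine s1.trans ?_
    have s2 : Eqv ((DwPow b u.length ++ c) ++ [j]) ((d ++ DwPow b u.length) ++ [j]) :=
      hpass.appR _
    refine Eqv.trans (by simpa using s2) ?_
    have s3 : Eqv (d ++ (DwPow b u.length ++ [j])) (d ++ ((r ++ u) ++ [j])) :=
      (hE.appR [j]).appL d
    refine Eqv.trans (by simpa using s3) ?_
    simpa using Eqv.refl (d ++ r ++ (u ++ [j]))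

/-- Common left multiples. -/
theorem commonLeft {b : ℕ} {u v : W} (hu : Bdd b u) (hv : Bdd b v) :
    ∃ r s, Bdd b r ∧ Bdd b s ∧ Eqv (r ++ u) (s ++ v) := by
  obtain ⟨r, hr, hru⟩ := leftMult hu
  obtain ⟨s, hs, hsv⟩ := leftMult hv
  set N := max u.length v.length with hN
  have e1 : DwPow b N = DwPow b (N - u.length) ++ DwPow b u.length := by
    rw [← DwPow_add]; congr 1; omega
  have e2 : DwPow b N = DwPow b (N - v.length) ++ DwPow b v.length := by
    rw [← DwPow_add]; congr 1; omega
  refine ⟨DwPow b (N - u.length) ++ r, DwPow b (N - v.length) ++ s,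
    (bdd_DwPow _ _).append hr, (bdd_DwPow _ _).append hs, ?_⟩
  have h1 : Eqv (DwPow b N) (DwPow b (N - u.length) ++ (r ++ u)) := by
    rw [e1]; exact hru.appL _
  have h2 : Eqv (DwPow b N) (DwPow b (N - v.length) ++ (s ++ v)) := by
    rw [e2]; exact hsv.appL _
  have := h1.symm.trans h2
  refine Eqv.trans (by simpa using Eqv.refl (DwPow b (N - u.length) ++ (r ++ u))) ?_
  refine Eqv.trans this ?_
  simpa using Eqv.refl (DwPow b (N - v.length) ++ (s ++ v))

/-- Common right multiples. -/
theorem commonRight {b : ℕ} {u v : W} (hu : Bdd b u) (hv : Bdd b v) :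
    ∃ c d, Bdd b c ∧ Bdd b d ∧ Eqv (u ++ c) (v ++ d) := by
  obtain ⟨r, s, hr, hs, hE⟩ := commonLeft hu.rev hv.rev
  refine ⟨r.reverse, s.reverse, hr.rev, hs.rev, ?_⟩
  have := hE.rev
  simpa using this

end BrW

namespace BrT

variable {S : Type*} (act : S → S → S) {m : ℕ}

theorem bm_at1 (i : Fin (m-1)) (a : Fin m → S) (h : (i:ℕ) < m) (h' : (i:ℕ)+1 < m) :
    braidMove act i a ⟨(i:ℕ), h⟩ = act (a ⟨(i:ℕ), h⟩) (a ⟨(i:ℕ)+1, h'⟩) := by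
  simp [braidMove]

theorem bm_at2 (i : Fin (m-1)) (a : Fin m → S) (h : (i:ℕ) < m) (h' : (i:ℕ)+1 < m) :
    braidMove act i a ⟨(i:ℕ)+1, h'⟩ = a ⟨(i:ℕ), h⟩ := by
  simp only [braidMove]
  rw [if_neg (by simp)]
  simp

theorem bm_ne (i : Fin (m-1)) (a : Fin m → S) (j : Fin m) (h1 : (j:ℕ) ≠ (i:ℕ))
    (h2 : (j:ℕ) ≠ (i:ℕ)+1) : braidMove act i a j = a j := by
  simp only [braidMove]
  rw [if_neg h1, if_neg h2]


theorem bm_inj (hcanc : ∀ x y z, act x y = act x z → y = z) (i : Fin (m-1)) :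
    Function.Injective (braidMove act i) := by
  intro a a' h
  have hi : (i:ℕ) < m := by have := i.isLt; omega
  have hi' : (i:ℕ)+1 < m := by have := i.isLt; omega
  have e2 : a ⟨(i:ℕ), hi⟩ = a' ⟨(i:ℕ), hi⟩ := by
    have := congrFun h ⟨(i:ℕ)+1, hi'⟩
    rwa [bm_at2 act i a hi hi', bm_at2 act i a' hi hi'] at this
  have e1 : a ⟨(i:ℕ)+1, hi'⟩ = a' ⟨(i:ℕ)+1, hi'⟩ := by
    have := congrFun h ⟨(i:ℕ), hi⟩
    rw [bm_at1 act i a hi hi', bm_at1 act i a' hi hi', e2] at this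
    exact hcanc _ _ _ this
  funext j
  by_cases h1 : (j:ℕ) = (i:ℕ)
  · have : j = ⟨(i:ℕ), hi⟩ := Fin.ext h1
    rw [this]; exact e2
  by_cases h2 : (j:ℕ) = (i:ℕ)+1
  · have : j = ⟨(i:ℕ)+1, hi'⟩ := Fin.ext h2
    rw [this]; exact e1
  · have := congrFun h j
    rwa [bm_ne act i a j h1 h2, bm_ne act i a' j h1 h2] at this

theorem bm_comm {i j : Fin (m-1)} (hd : 2 ≤ Nat.dist (i:ℕ) (j:ℕ)) (a : Fin m → S) :
    braidMove act i (braidMove act j a) = braidMove act j (braidMove act i a) := by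
  have hdd : 2 ≤ (i:ℕ) - (j:ℕ) + ((j:ℕ) - (i:ℕ)) := hd
  funext p
  simp only [braidMove]
  split_ifs <;> first
    | rfl
    | omega
    | (congr 1 <;> first | rfl | (apply congrArg; exact Fin.ext (by simp; omega)) | omega)

theorem bm_braid_succ (hLD : ∀ x y z, act x (act y z) = act (act x y) (act x z))
    {i j : Fin (m-1)} (hj : (j:ℕ) = (i:ℕ)+1) (a : Fin m → S) :
    braidMove act i (braidMove act j (braidMove act i a)) =
      braidMove act j (braidMove act i (braidMove act j a)) := by
  have h0 : (i:ℕ) < m := by have := i.isLt; omega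
  have h1 : (i:ℕ)+1 < m := by have := i.isLt; omega
  have h2 : (i:ℕ)+2 < m := by have := j.isLt; omega
  set x := a ⟨(i:ℕ), h0⟩ with hx
  set y := a ⟨(i:ℕ)+1, h1⟩ with hy
  set z := a ⟨(i:ℕ)+2, h2⟩ with hz
  set B := braidMove act i a with hB
  set C := braidMove act j B with hC
  set D := braidMove act j a with hD
  set E := braidMove act i D with hE
  have hB0 : B ⟨(i:ℕ), h0⟩ = act x y := bm_at1 act i a h0 h1
  have hB1 : B ⟨(i:ℕ)+1, h1⟩ = x := bm_at2 act i a h0 h1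
  have hB2 : B ⟨(i:ℕ)+2, h2⟩ = z := bm_ne act i a _ (by simp only [Fin.val_mk]; omega) (by simp only [Fin.val_mk]; omega)
  have hC0 : C ⟨(i:ℕ), h0⟩ = act x y := by
    rw [hC, bm_ne act j B _ (by simp only [Fin.val_mk, hj]; omega) (by simp only [Fin.val_mk, hj]; omega), hB0]
  have hC1 : C ⟨(i:ℕ)+1, h1⟩ = act x z := by
    rw [hC, show (⟨(i:ℕ)+1, h1⟩ : Fin m) = ⟨(j:ℕ), by omega⟩ from Fin.ext (by simp [hj]),
      bm_at1 act j B (by omega) (by omega)]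
    congr 1
    · rw [show (⟨(j:ℕ), by omega⟩ : Fin m) = ⟨(i:ℕ)+1, h1⟩ from Fin.ext (by simp [hj]), hB1]
    · rw [show (⟨(j:ℕ)+1, by omega⟩ : Fin m) = ⟨(i:ℕ)+2, h2⟩ from Fin.ext (by simp [hj]), hB2]
  have hC2 : C ⟨(i:ℕ)+2, h2⟩ = x := by
    rw [hC, show (⟨(i:ℕ)+2, h2⟩ : Fin m) = ⟨(j:ℕ)+1, by omega⟩ from Fin.ext (by simp [hj]),
      bm_at2 act j B (by omega) (by omega),
      show (⟨(j:ℕ), by omega⟩ : Fin m) = ⟨(i:ℕ)+1, h1⟩ from Fin.ext (by simp [hj]), hB1]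
  have hD0 : D ⟨(i:ℕ), h0⟩ = x := by
    rw [hD, bm_ne act j a _ (by simp only [Fin.val_mk, hj]; omega) (by simp only [Fin.val_mk, hj]; omega)]
  have hD1 : D ⟨(i:ℕ)+1, h1⟩ = act y z := by
    rw [hD, show (⟨(i:ℕ)+1, h1⟩ : Fin m) = ⟨(j:ℕ), by omega⟩ from Fin.ext (by simp [hj]),
      bm_at1 act j a (by omega) (by omega)]
    congr 1
    · rw [hy]; congr 1; exact Fin.ext (by simp [hj])
    · rw [hz]; congr 1; exact Fin.ext (by simp [hj])
  have hD2 : D ⟨(i:ℕ)+2, h2⟩ = y := by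
    rw [hD, show (⟨(i:ℕ)+2, h2⟩ : Fin m) = ⟨(j:ℕ)+1, by omega⟩ from Fin.ext (by simp [hj]),
      bm_at2 act j a (by omega) (by omega), hy]
    congr 1; exact Fin.ext (by simp [hj])
  have hE0 : E ⟨(i:ℕ), h0⟩ = act x (act y z) := by
    rw [hE, bm_at1 act i D h0 h1, hD0, hD1]
  have hE1 : E ⟨(i:ℕ)+1, h1⟩ = x := by rw [hE, bm_at2 act i D h0 h1, hD0]
  have hE2 : E ⟨(i:ℕ)+2, h2⟩ = y := by
    rw [hE, bm_ne act i D _ (by simp only [Fin.val_mk]; omega) (by simp only [Fin.val_mk]; omega), hD2]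
  funext p
  by_cases hp0 : (p:ℕ) = (i:ℕ)
  · rw [show p = ⟨(i:ℕ), h0⟩ from Fin.ext hp0]
    rw [bm_at1 act i C h0 h1, hC0, hC1,
      bm_ne act j E _ (by simp only [Fin.val_mk, hj]; omega) (by simp only [Fin.val_mk, hj]; omega), hE0]
    exact (hLD x y z).symm
  by_cases hp1 : (p:ℕ) = (i:ℕ)+1
  · rw [show p = ⟨(i:ℕ)+1, h1⟩ from Fin.ext hp1]
    rw [bm_at2 act i C h0 h1, hC0,
      show (⟨(i:ℕ)+1, h1⟩ : Fin m) = ⟨(j:ℕ), by omega⟩ from Fin.ext (by simp [hj]),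
      bm_at1 act j E (by omega) (by omega),
      show (⟨(j:ℕ), by omega⟩ : Fin m) = ⟨(i:ℕ)+1, h1⟩ from Fin.ext (by simp [hj]), hE1,
      show (⟨(j:ℕ)+1, by omega⟩ : Fin m) = ⟨(i:ℕ)+2, h2⟩ from Fin.ext (by simp [hj]), hE2]
  by_cases hp2 : (p:ℕ) = (i:ℕ)+2
  · rw [show p = ⟨(i:ℕ)+2, h2⟩ from Fin.ext hp2]
    rw [bm_ne act i C _ (by simp only [Fin.val_mk]; omega) (by simp only [Fin.val_mk]; omega), hC2,
      show (⟨(i:ℕ)+2, h2⟩ : Fin m) = ⟨(j:ℕ)+1, by omega⟩ from Fin.ext (by simp [hj]),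
      bm_at2 act j E (by omega) (by omega),
      show (⟨(j:ℕ), by omega⟩ : Fin m) = ⟨(i:ℕ)+1, h1⟩ from Fin.ext (by simp [hj]), hE1]
  · rw [bm_ne act i C p hp0 hp1, hC, bm_ne act j B p (by omega) (by omega), hB,
      bm_ne act i a p hp0 hp1, bm_ne act j E p (by omega) (by omega), hE,
      bm_ne act i D p hp0 hp1, hD, bm_ne act j a p (by omega) (by omega)]



open BrW


/-! ### The action of positive words on colour vectors -/

/-- One positive letter acting on a colouring (identity for out-of-range letters). -/
def stepF (i : ℕ) : (Fin m → S) → (Fin m → S) :=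
  if h : i < m - 1 then braidMove act ⟨i, h⟩ else id

/-- A positive word acting on a colouring. -/
def Fw : List ℕ → (Fin m → S) → (Fin m → S)
  | [] => id
  | i :: w => fun a => Fw w (stepF act i a)

theorem Fw_append (u v : List ℕ) (a : Fin m → S) :
    Fw act (u ++ v) a = Fw act v (Fw act u a) := by
  induction u generalizing a with
  | nil => rfl
  | cons i u ih => exact ih (stepF act i a)

theorem stepF_inj (hcanc : ∀ x y z, act x y = act x z → y = z) (i : ℕ) :
    Function.Injective (stepF act i : (Fin m → S) → (Fin m → S)) := by
  unfold stepF
  split_ifs with h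
  · exact bm_inj act hcanc _
  · exact fun a b h => h

theorem Fw_inj (hcanc : ∀ x y z, act x y = act x z → y = z) (u : List ℕ) :
    Function.Injective (Fw act u : (Fin m → S) → (Fin m → S)) := by
  induction u with
  | nil => exact fun a b h => h
  | cons i u ih => exact fun a b h => stepF_inj act hcanc i (ih h)

theorem Fw_bp (hLD : ∀ x y z, act x (act y z) = act (act x y) (act x z))
    {x y : List ℕ} (h : Bp x y) (hb : Bdd (m-1) x) (a : Fin m → S) :
    Fw act x a = Fw act y a := by
  cases h with
  | @comm i j hd =>
    have hi : i < m - 1 := hb i (by simp)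
    have hj : j < m - 1 := hb j (by simp)
    show stepF act j (stepF act i a) = stepF act i (stepF act j a)
    rw [stepF, stepF, dif_pos hi, dif_pos hj]
    exact (bm_comm act (i := ⟨i, hi⟩) (j := ⟨j, hj⟩) hd a).symm
  | @braid i j hd =>
    have hi : i < m - 1 := hb i (by simp)
    have hj : j < m - 1 := hb j (by simp)
    show stepF act i (stepF act j (stepF act i a)) = stepF act j (stepF act i (stepF act j a))
    rw [stepF, stepF, dif_pos hi, dif_pos hj]
    have hd' : i - j + (j - i) = 1 := hd
    rcases (by omega : j = i + 1 ∨ i = j + 1) with hc | hc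
    · exact bm_braid_succ act hLD (i := ⟨i, hi⟩) (j := ⟨j, hj⟩) hc a
    · exact (bm_braid_succ act hLD (i := ⟨j, hj⟩) (j := ⟨i, hi⟩) hc a).symm

theorem Fw_rel1 (hLD : ∀ x y z, act x (act y z) = act (act x y) (act x z))
    {u v : List ℕ} (h : Rel1 u v) (hb : Bdd (m-1) u) (a : Fin m → S) :
    Fw act u a = Fw act v a := by
  obtain ⟨A, x, y, B, hp, h1, h2⟩ := h
  subst h1; subst h2
  rw [Fw_append, Fw_append, Fw_append, Fw_append]
  rw [Fw_bp act hLD hp hb.of_append_left.of_append_right]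

theorem Fw_eqv (hLD : ∀ x y z, act x (act y z) = act (act x y) (act x z))
    {u v : List ℕ} (h : Eqv u v) (hb : Bdd (m-1) u) (a : Fin m → S) :
    Fw act u a = Fw act v a := by
  obtain ⟨n, h⟩ := h
  induction h generalizing a with
  | refl => rfl
  | step h1 h2 ih =>
    rw [Fw_rel1 act hLD h1 hb]
    exact ih (h1.bdd hb) a

/-! ### Colour steps -/

theorem step_pos {i : Fin (m-1)} {a b : Fin m → S}
    (h : ColourStep act (i, true) a b) : b = stepF act (i:ℕ) a := by
  simp only [ColourStep, if_pos] at h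
  rw [h, stepF, dif_pos i.isLt]

theorem step_neg {i : Fin (m-1)} {a b : Fin m → S}
    (h : ColourStep act (i, false) a b) : stepF act (i:ℕ) b = a := by
  simp only [ColourStep, Bool.false_eq_true, if_neg, not_false_iff] at h
  obtain ⟨c, hc, rfl⟩ := h
  rw [stepF, dif_pos i.isLt]
  have h0 : (i:ℕ) < m := by have := i.isLt; omega
  have h1 : (i:ℕ)+1 < m := by have := i.isLt; omega
  have e : (⟨(i:ℕ), i.isLt⟩ : Fin (m-1)) = i := by simp
  rw [e]
  have n0 : negMove i c a ⟨(i:ℕ), h0⟩ = a ⟨(i:ℕ)+1, h1⟩ := by simp [negMove]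
  have n1 : negMove i c a ⟨(i:ℕ)+1, h1⟩ = c := by
    simp only [negMove]
    rw [if_neg (by simp)]
    simp
  funext p
  by_cases hp0 : (p:ℕ) = (i:ℕ)
  · rw [show p = ⟨(i:ℕ), h0⟩ from Fin.ext hp0, bm_at1 act i _ h0 h1, n0, n1]
    exact hc
  by_cases hp1 : (p:ℕ) = (i:ℕ)+1
  · rw [show p = ⟨(i:ℕ)+1, h1⟩ from Fin.ext hp1, bm_at2 act i _ h0 h1, n0]
  · rw [bm_ne act i _ p hp0 hp1]
    simp only [negMove]
    rw [if_neg hp0, if_neg hp1]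

/-! ### Positive products in the presented group -/

/-- The positive generator (or `1` if out of range). -/
def ofN (m : ℕ) (i : ℕ) : PresentedGroup (braidRels (m-1)) :=
  if h : i < m-1 then PresentedGroup.of ⟨i, h⟩ else 1

/-- Product of a positive word in the presented group. -/
def pprodN (m : ℕ) : List ℕ → PresentedGroup (braidRels (m-1))
  | [] => 1
  | i :: w => ofN m i * pprodN m w

theorem pprodN_append (u v : List ℕ) :
    pprodN m (u ++ v) = pprodN m u * pprodN m v := by
  induction u with
  | nil => simp [pprodN]
  | cons i u ih => show ofN m i * pprodN m (u ++ v) = _; rw [ih, pprodN, mul_assoc]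

theorem ofN_coe (i : Fin (m-1)) : ofN m (i:ℕ) = PresentedGroup.of i := by
  rw [ofN, dif_pos i.isLt]

theorem rel_one {r : FreeGroup (Fin (m-1))} (hr : r ∈ braidRels (m-1)) :
    PresentedGroup.mk (braidRels (m-1)) r = 1 := by
  apply (QuotientGroup.eq_one_iff _).2
  exact Subgroup.subset_normalClosure hr

theorem rel_comm {I J : Fin (m-1)} (h : 2 ≤ Nat.dist (I:ℕ) (J:ℕ)) :
    (PresentedGroup.of I : PresentedGroup (braidRels (m-1))) * PresentedGroup.of J =
      PresentedGroup.of J * PresentedGroup.of I := by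
  have h1 := rel_one (m := m) (Or.inl ⟨I, J, h, rfl⟩)
  rw [map_mul, map_mul, map_inv, map_mul] at h1
  exact mul_inv_eq_one.1 h1

theorem rel_braid {I J : Fin (m-1)} (h : Nat.dist (I:ℕ) (J:ℕ) = 1) :
    (PresentedGroup.of I : PresentedGroup (braidRels (m-1))) * PresentedGroup.of J *
        PresentedGroup.of I =
      PresentedGroup.of J * PresentedGroup.of I * PresentedGroup.of J := by
  have h1 := rel_one (m := m) (Or.inr ⟨I, J, h, rfl⟩)
  rw [map_mul, map_mul, map_mul, map_inv, map_mul, map_mul] at h1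
  exact mul_inv_eq_one.1 h1

theorem pprodN_bp {x y : List ℕ} (h : Bp x y) (hb : Bdd (m-1) x) :
    pprodN m x = pprodN m y := by
  cases h with
  | @comm i j hd =>
    have hi : i < m - 1 := hb i (by simp)
    have hj : j < m - 1 := hb j (by simp)
    show ofN m i * (ofN m j * 1) = ofN m j * (ofN m i * 1)
    rw [mul_one, mul_one, ofN, ofN, dif_pos hi, dif_pos hj]
    exact rel_comm (I := ⟨i, hi⟩) (J := ⟨j, hj⟩) hd
  | @braid i j hd =>
    have hi : i < m - 1 := hb i (by simp)
    have hj : j < m - 1 := hb j (by simp)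
    show ofN m i * (ofN m j * (ofN m i * 1)) = ofN m j * (ofN m i * (ofN m j * 1))
    rw [mul_one, mul_one, ofN, ofN, dif_pos hi, dif_pos hj, ← mul_assoc, ← mul_assoc]
    exact rel_braid (I := ⟨i, hi⟩) (J := ⟨j, hj⟩) hd

theorem pprodN_eqv {u v : List ℕ} (h : Eqv u v) (hb : Bdd (m-1) u) :
    pprodN m u = pprodN m v := by
  obtain ⟨n, h⟩ := h
  induction h with
  | refl => rfl
  | step h1 h2 ih =>
    refine Eq.trans ?_ (ih (h1.bdd hb))
    obtain ⟨A, x, y, B, hp, e1, e2⟩ := h1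
    subst e1; subst e2
    rw [pprodN_append, pprodN_append, pprodN_append, pprodN_append,
      pprodN_bp hp hb.of_append_left.of_append_right]

/-! ### The group of fractions acting on pairs -/

/-- Pairs of bounded positive words (thought of as right fractions `p q⁻¹`). -/
def Dd (m : ℕ) := {pq : List ℕ × List ℕ // Bdd (m-1) pq.1 ∧ Bdd (m-1) pq.2}

/-- Equivalence of fractions (common right multiples). -/
def XR (m : ℕ) (P Q : Dd m) : Prop :=
  ∃ r r' : List ℕ, Bdd (m-1) r ∧ Bdd (m-1) r' ∧
    Eqv (P.1.1 ++ r) (Q.1.1 ++ r') ∧ Eqv (P.1.2 ++ r) (Q.1.2 ++ r')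

theorem XR_refl (P : Dd m) : XR m P P :=
  ⟨[], [], by intro x hx; simp at hx, by intro x hx; simp at hx,
    by simpa using Eqv.refl _, by simpa using Eqv.refl _⟩

theorem XR_symm {P Q : Dd m} (h : XR m P Q) : XR m Q P := by
  obtain ⟨r, r', h1, h2, h3, h4⟩ := h
  exact ⟨r', r, h2, h1, h3.symm, h4.symm⟩

theorem XR_trans {P Q R : Dd m} (h : XR m P Q) (h' : XR m Q R) : XR m P R := by
  obtain ⟨r, r', h1, h2, h3, h4⟩ := h
  obtain ⟨s, s', h1', h2', h3', h4'⟩ := h'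
  obtain ⟨t, t', ht, ht', hE⟩ := commonRight h2 h1'
  refine ⟨r ++ t, s' ++ t', h1.append ht, h2'.append ht', ?_, ?_⟩
  · have c1 : Eqv (P.1.1 ++ r ++ t) (Q.1.1 ++ r' ++ t) := h3.appR t
    have c2 : Eqv (Q.1.1 ++ (r' ++ t)) (Q.1.1 ++ (s ++ t')) := hE.appL _
    have c3 : Eqv (Q.1.1 ++ s ++ t') (R.1.1 ++ s' ++ t') := h3'.appR t'
    calc (P.1.1 ++ (r ++ t) : List ℕ) ≋ (Q.1.1 ++ r' ++ t) := by simpa using c1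
      _ ≋ (Q.1.1 ++ (s ++ t')) := by simpa using c2
      _ ≋ (R.1.1 ++ (s' ++ t')) := by simpa using c3
  · have c1 : Eqv (P.1.2 ++ r ++ t) (Q.1.2 ++ r' ++ t) := h4.appR t
    have c2 : Eqv (Q.1.2 ++ (r' ++ t)) (Q.1.2 ++ (s ++ t')) := hE.appL _
    have c3 : Eqv (Q.1.2 ++ s ++ t') (R.1.2 ++ s' ++ t') := h4'.appR t'
    calc (P.1.2 ++ (r ++ t) : List ℕ) ≋ (Q.1.2 ++ r' ++ t) := by simpa using c1
      _ ≋ (Q.1.2 ++ (s ++ t')) := by simpa using c2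
      _ ≋ (R.1.2 ++ (s' ++ t')) := by simpa using c3

/-- The setoid of fractions. -/
def sX (m : ℕ) : Setoid (Dd m) := ⟨XR m, XR_refl, XR_symm, XR_trans⟩

/-- The set on which the braid group acts. -/
def Xq (m : ℕ) := Quotient (sX m)

def mkX (P : Dd m) : Xq m := Quotient.mk (sX m) P

theorem mkX_eq {P Q : Dd m} (h : XR m P Q) : mkX P = mkX Q := Quotient.sound h

theorem mkX_exact {P Q : Dd m} (h : mkX P = mkX Q) : XR m P Q := Quotient.exact h

/-- Positive action. -/
def posActD (i : Fin (m-1)) (P : Dd m) : Dd m :=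
  ⟨((i:ℕ) :: P.1.1, P.1.2), fun x hx => by
      rcases List.mem_cons.1 hx with h | h
      · subst h; exact i.isLt
      · exact P.2.1 x h,
    P.2.2⟩

theorem posActD_resp (i : Fin (m-1)) {P Q : Dd m} (h : XR m P Q) :
    XR m (posActD i P) (posActD i Q) := by
  obtain ⟨r, r', h1, h2, h3, h4⟩ := h
  exact ⟨r, r', h1, h2, h3.cons (i:ℕ), h4⟩

def posAct (i : Fin (m-1)) : Xq m → Xq m :=
  Quotient.map' (posActD i) (fun _ _ h => posActD_resp i h)

theorem posAct_mk (i : Fin (m-1)) (P : Dd m) : posAct i (mkX P) = mkX (posActD i P) := rfl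

/-- Choice of a common right multiple for the negative action. -/
theorem crm_spec (i : Fin (m-1)) (p : List ℕ) (hp : Bdd (m-1) p) :
    ∃ cd : List ℕ × List ℕ, Bdd (m-1) cd.1 ∧ Bdd (m-1) cd.2 ∧
      Eqv ((i:ℕ) :: cd.1) (p ++ cd.2) := by
  obtain ⟨c, d, hc, hd, hE⟩ := commonRight (b := m-1)
    (u := [(i:ℕ)]) (v := p) (fun x hx => by simp at hx; subst hx; exact i.isLt) hp
  exact ⟨(c, d), hc, hd, by simpa using hE⟩

noncomputable def negActD (i : Fin (m-1)) (P : Dd m) : Dd m :=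
  ⟨((crm_spec i P.1.1 P.2.1).choose.1, P.1.2 ++ (crm_spec i P.1.1 P.2.1).choose.2),
    (crm_spec i P.1.1 P.2.1).choose_spec.1,
    P.2.2.append (crm_spec i P.1.1 P.2.1).choose_spec.2.1⟩

/-- The key well-definedness computation for the negative action. -/
theorem negKey {i : Fin (m-1)} {p q p' q' c d c' d' r r' : List ℕ}
    (hbd : Bdd (m-1) d) (hbr : Bdd (m-1) r) (hbr' : Bdd (m-1) r') (hbd' : Bdd (m-1) d')
    (h1 : Eqv ((i:ℕ) :: c) (p ++ d)) (h2 : Eqv ((i:ℕ) :: c') (p' ++ d'))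
    (hw1 : Eqv (p ++ r) (p' ++ r')) (hw2 : Eqv (q ++ r) (q' ++ r')) :
    ∃ t t', Bdd (m-1) t ∧ Bdd (m-1) t' ∧
      Eqv (c ++ t) (c' ++ t') ∧ Eqv ((q ++ d) ++ t) ((q' ++ d') ++ t') := by
  obtain ⟨x, y, hbx, hby, hxy⟩ := commonRight hbd hbr
  obtain ⟨z, z', hbz, hbz', hzz⟩ := commonRight (hbr'.append hby) hbd'
  refine ⟨x ++ z, z', hbx.append hbz, hbz', ?_, ?_⟩
  · apply cancel_head (i := (i:ℕ))
    calc ((i:ℕ) :: (c ++ (x ++ z)) : List ℕ) ≋ ((p ++ d) ++ (x ++ z)) := by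
          simpa using (h1.appR (x ++ z))
      _ ≋ (p ++ ((r ++ y) ++ z)) := by
          have := (hxy.appL p).appR z
          simpa using this
      _ ≋ ((p' ++ r') ++ (y ++ z)) := by
          have := (hw1.appR (y ++ z))
          simpa using this
      _ ≋ (p' ++ (d' ++ z')) := by
          have := (hzz.appL p')
          simpa using this
      _ ≋ ((i:ℕ) :: (c' ++ z')) := by
          have := (h2.appR z').symm
          simpa using this
  · calc ((q ++ d) ++ (x ++ z) : List ℕ) ≋ (q ++ ((r ++ y) ++ z)) := by
          have := (hxy.appL q).appR z
          simpa using this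
      _ ≋ ((q' ++ r') ++ (y ++ z)) := by
          have := (hw2.appR (y ++ z))
          simpa using this
      _ ≋ (q' ++ (d' ++ z')) := by
          have := (hzz.appL q')
          simpa using this
      _ ≋ ((q' ++ d') ++ z') := by
          simpa using Eqv.refl (q' ++ d' ++ z')

theorem negActD_resp (i : Fin (m-1)) {P Q : Dd m} (h : XR m P Q) :
    XR m (negActD i P) (negActD i Q) := by
  obtain ⟨r, r', h1, h2, h3, h4⟩ := h
  obtain ⟨hc, hd, hE⟩ := (crm_spec i P.1.1 P.2.1).choose_spec
  obtain ⟨hc', hd', hE'⟩ := (crm_spec i Q.1.1 Q.2.1).choose_spec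
  obtain ⟨t, t', hbt, hbt', e1, e2⟩ := negKey hd h1 h2 hd' hE hE' h3 h4
  exact ⟨t, t', hbt, hbt', e1, e2⟩

noncomputable def negAct (i : Fin (m-1)) : Xq m → Xq m :=
  Quotient.map' (negActD i) (fun _ _ h => negActD_resp i h)

theorem negAct_mk (i : Fin (m-1)) (P : Dd m) : negAct i (mkX P) = mkX (negActD i P) := rfl

theorem neg_pos (i : Fin (m-1)) (x : Xq m) : negAct i (posAct i x) = x := by
  induction x using Quotient.inductionOn' with
  | h P =>
    show negAct i (posAct i (mkX P)) = mkX P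
    rw [posAct_mk, negAct_mk]
    apply mkX_eq
    set Q := posActD i P with hQ
    obtain ⟨hc, hd, hE⟩ := (crm_spec i Q.1.1 Q.2.1).choose_spec
    -- hE : Eqv (i :: c) ((i :: P.1.1) ++ d)
    have hcan : Eqv ((crm_spec i Q.1.1 Q.2.1).choose.1 ++ [])
        (P.1.1 ++ (crm_spec i Q.1.1 Q.2.1).choose.2) := by
      have := cancel_head (i := (i:ℕ)) (hE : Eqv _ ((i:ℕ) :: (P.1.1 ++ _)))
      simpa using this
    refine ⟨[], (crm_spec i Q.1.1 Q.2.1).choose.2, by intro x hx; simp at hx, hd, hcan, ?_⟩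
    simpa [negActD, hQ, posActD] using Eqv.refl (P.1.2 ++ (crm_spec i Q.1.1 Q.2.1).choose.2)

theorem pos_neg (i : Fin (m-1)) (x : Xq m) : posAct i (negAct i x) = x := by
  induction x using Quotient.inductionOn' with
  | h P =>
    show posAct i (negAct i (mkX P)) = mkX P
    rw [negAct_mk, posAct_mk]
    apply mkX_eq
    obtain ⟨hc, hd, hE⟩ := (crm_spec i P.1.1 P.2.1).choose_spec
    refine ⟨[], (crm_spec i P.1.1 P.2.1).choose.2, by intro x hx; simp at hx, hd, ?_, ?_⟩
    · simpa [posActD, negActD] using hE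
    · simpa [posActD, negActD] using Eqv.refl (P.1.2 ++ (crm_spec i P.1.1 P.2.1).choose.2)

/-- The permutation of `Xq` given by a braid generator. -/
noncomputable def permM (i : Fin (m-1)) : Equiv.Perm (Xq m) :=
  ⟨posAct i, negAct i, neg_pos i, pos_neg i⟩

theorem permM_apply (i : Fin (m-1)) (x : Xq m) : permM i x = posAct i x := rfl

theorem perm_rels (hm : 2 ≤ m) :
    ∀ r ∈ braidRels (m-1), FreeGroup.lift (permM (m := m)) r = 1 := by
  rintro r (⟨I, J, hd, rfl⟩ | ⟨I, J, hd, rfl⟩)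
  · rw [map_mul, map_inv, map_mul, map_mul, FreeGroup.lift_apply_of, FreeGroup.lift_apply_of]
    rw [mul_inv_eq_one]
    ext x
    induction x using Quotient.inductionOn' with
    | h P =>
      show (permM I * permM J) (mkX P) = (permM J * permM I) (mkX P)
      rw [Equiv.Perm.mul_apply, Equiv.Perm.mul_apply, permM_apply, permM_apply,
        permM_apply, permM_apply, posAct_mk, posAct_mk, posAct_mk, posAct_mk]
      apply mkX_eq
      refine ⟨[], [], by intro x hx; simp at hx, by intro x hx; simp at hx, ?_, ?_⟩
      · simpa [posActD] using swapE hd P.1.1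
      · exact Eqv.refl _
  · rw [map_mul, map_inv, map_mul, map_mul, map_mul, map_mul, FreeGroup.lift_apply_of,
      FreeGroup.lift_apply_of]
    rw [mul_inv_eq_one]
    ext x
    induction x using Quotient.inductionOn' with
    | h P =>
      show (permM I * permM J * permM I) (mkX P) = (permM J * permM I * permM J) (mkX P)
      rw [Equiv.Perm.mul_apply, Equiv.Perm.mul_apply, Equiv.Perm.mul_apply,
        Equiv.Perm.mul_apply, permM_apply, permM_apply, permM_apply, permM_apply,
        permM_apply, permM_apply, posAct_mk, posAct_mk, posAct_mk, posAct_mk,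
        posAct_mk, posAct_mk]
      apply mkX_eq
      refine ⟨[], [], by intro x hx; simp at hx, by intro x hx; simp at hx, ?_, ?_⟩
      · simpa [posActD] using braidE hd P.1.1
      · exact Eqv.refl _

/-- The homomorphism from the braid group to permutations of fractions. -/
noncomputable def Phi (hm : 2 ≤ m) : PresentedGroup (braidRels (m-1)) →* Equiv.Perm (Xq m) :=
  PresentedGroup.toGroup (perm_rels hm)

def emptyD : Dd m := ⟨([], []), fun x hx => by simp at hx, fun x hx => by simp at hx⟩

def wordD (P : List ℕ) (hP : Bdd (m-1) P) : Dd m := ⟨(P, []), hP, fun x hx => by simp at hx⟩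

theorem Phi_pprod (hm : 2 ≤ m) (P : List ℕ) (hP : Bdd (m-1) P) :
    Phi hm (pprodN m P) (mkX emptyD) = mkX (wordD P hP) := by
  induction P with
  | nil =>
    show Phi hm 1 (mkX emptyD) = _
    rw [map_one]
    rfl
  | cons i w ih =>
    have hi : i < m - 1 := hP i (by simp)
    have hw : Bdd (m-1) w := fun x hx => hP x (by simp [hx])
    show Phi hm (ofN m i * pprodN m w) (mkX emptyD) = _
    rw [map_mul, ofN, dif_pos hi]
    have : Phi hm (PresentedGroup.of ⟨i, hi⟩) = permM ⟨i, hi⟩ :=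
      PresentedGroup.toGroup.of (perm_rels hm)
    rw [Equiv.Perm.mul_apply, ih hw, this, permM_apply, posAct_mk]
    rfl

/-- The embedding property: equal positive braids have a common-multiple witness. -/
theorem embed (hm : 2 ≤ m) {P Q : List ℕ} (hP : Bdd (m-1) P) (hQ : Bdd (m-1) Q)
    (h : pprodN m P = pprodN m Q) :
    ∃ r r', Bdd (m-1) r ∧ Bdd (m-1) r' ∧ Eqv (P ++ r) (Q ++ r') ∧ Eqv r r' := by
  have h1 : mkX (wordD P hP) = mkX (wordD Q hQ) := by
    rw [← Phi_pprod hm P hP, ← Phi_pprod hm Q hQ, h]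
  obtain ⟨r, r', h1', h2', h3, h4⟩ := mkX_exact h1
  exact ⟨r, r', h1', h2', h3, by simpa [wordD] using h4⟩

end BrT


namespace BrT

open BrW

variable {S : Type*} (act : S → S → S) {m : ℕ}

theorem wordProd_cons (l : Fin (m-1) × Bool) (w : List (Fin (m-1) × Bool)) :
    wordProd (l :: w) =
      (if l.2 then PresentedGroup.of l.1 else (PresentedGroup.of l.1)⁻¹) * wordProd w := by
  simp [wordProd]

theorem G5 (hLD : ∀ x y z, act x (act y z) = act (act x y) (act x z)) :
    ∀ {w : List (Fin (m-1) × Bool)} {a b : Fin m → S},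
    ColourRel act w a b →
    ∃ p q : List ℕ, Bdd (m-1) p ∧ Bdd (m-1) q ∧
      wordProd w * pprodN m q = pprodN m p ∧ Fw act q b = Fw act p a := by
  intro w
  induction w with
  | nil =>
    intro a b h
    have hb : b = a := h
    refine ⟨[], [], fun x hx => by simp at hx, fun x hx => by simp at hx, ?_, ?_⟩
    · show wordProd [] * 1 = 1
      simp [wordProd]
    · show b = a
      exact hb
  | cons l w ih =>
    intro a b h
    obtain ⟨a', hstep, hrest⟩ := h
    obtain ⟨p', q', hp', hq', hgrp, hF⟩ := ih hrest
    rcases l with ⟨i, bo⟩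
    cases bo with
    | true =>
      have ha' : a' = stepF act (i:ℕ) a := step_pos act hstep
      refine ⟨(i:ℕ) :: p', q', fun x hx => ?_, hq', ?_, ?_⟩
      · rcases List.mem_cons.1 hx with h | h
        · subst h; exact i.isLt
        · exact hp' x h
      · have e : wordProd ((i, true) :: w) = PresentedGroup.of i * wordProd w := by
          simp [wordProd]
        rw [e, mul_assoc, hgrp]
        show _ = ofN m (i:ℕ) * pprodN m p'
        rw [ofN_coe]
      · show Fw act q' b = Fw act p' (stepF act (i:ℕ) a)
        rw [hF, ha']
    | false =>
      have ha : stepF act (i:ℕ) a' = a := step_neg act hstep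
      obtain ⟨cd, hc, hd, hE⟩ := crm_spec i p' hp'
      obtain ⟨c, d⟩ := cd
      simp only at hc hd hE
      have hbdic : Bdd (m-1) ((i:ℕ) :: c) := by
        intro x hx
        rcases List.mem_cons.1 hx with h | h
        · subst h; exact i.isLt
        · exact hc x h
      have hbdpd : Bdd (m-1) (p' ++ d) := hp'.append hd
      refine ⟨c, q' ++ d, hc, hq'.append hd, ?_, ?_⟩
      · have e : wordProd ((i, false) :: w) = (PresentedGroup.of i)⁻¹ * wordProd w := by
          simp [wordProd]
        have e2 : pprodN m ((i:ℕ) :: c) = PresentedGroup.of i * pprodN m c := by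
          show ofN m (i:ℕ) * pprodN m c = _
          rw [ofN_coe]
        rw [e, pprodN_append, mul_assoc, ← mul_assoc (wordProd w), hgrp,
          ← pprodN_append, ← pprodN_eqv hE hbdic, e2, ← mul_assoc, inv_mul_cancel, one_mul]
      · rw [Fw_append, hF, ← Fw_append]
        rw [Fw_eqv act hLD hE.symm hbdpd a']
        show Fw act c (stepF act (i:ℕ) a') = _
        rw [ha]

end BrT

/-- over a left-cancellative LD-system, if two braid words represent the
same braid and both partial colourings from `a` are defined, then they coincide. -/
theorem partial_colouring_invariance {S : Type*} (act : S → S → S)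
    (hLD : ∀ x y z, act x (act y z) = act (act x y) (act x z))
    (hcanc : ∀ x y z, act x y = act x z → y = z)
    (m : ℕ) (hm : 2 ≤ m)
    (w w' : List (Fin (m - 1) × Bool)) (hww : wordProd w = wordProd w')
    (a b b' : Fin m → S) (hb : ColourRel act w a b) (hb' : ColourRel act w' a b') :
    b = b' := by
  open BrW BrT in
  obtain ⟨p, q, hp, hq, hg, hF⟩ := G5 act hLD hb
  obtain ⟨p', q', hp', hq', hg', hF'⟩ := G5 act hLD hb'
  obtain ⟨s, s', hs, hs', hqq⟩ := BrW.commonRight hq hq'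
  have hgg : pprodN m (p ++ s) = pprodN m (p' ++ s') := by
    rw [pprodN_append, pprodN_append, ← hg, ← hg', mul_assoc, mul_assoc,
      ← pprodN_append, ← pprodN_append, hww, pprodN_eqv hqq (hq.append hs)]
  obtain ⟨r, r', hr, hr', hE, hrr⟩ := embed hm (hp.append hs) (hp'.append hs') hgg
  have key : Fw act s (Fw act p a) = Fw act s' (Fw act p' a) := by
    have e1 : Fw act ((p ++ s) ++ r) a = Fw act ((p' ++ s') ++ r') a :=
      Fw_eqv act hLD hE ((hp.append hs).append hr) a
    have e2 : Fw act ((p' ++ s') ++ r') a = Fw act ((p' ++ s') ++ r) a :=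
      Fw_eqv act hLD (hrr.symm.appL (p' ++ s')) ((hp'.append hs').append hr') a
    simp only [Fw_append] at e1 e2
    exact BrT.Fw_inj act hcanc r (e1.trans e2)
  have final1 : Fw act (q ++ s) b = Fw act (q' ++ s') b' := by
    rw [Fw_append, Fw_append, hF, hF']
    exact key
  have final2 : Fw act (q ++ s) b' = Fw act (q' ++ s') b' :=
    Fw_eqv act hLD hqq (hq.append hs) b'
  exact BrT.Fw_inj act hcanc (q ++ s) (final1.trans final2.symm)
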